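/- Let N ≥ 3 be an integer, q > 1 and m > 1 - 2/N. Then there exists a constant S_N > 0 depending only on N such that for every nonnegative u ∈ L¹(ℝ^N) with u ∈ L^q(ℝ^N) and u^{(m+q-1)/2} ∈ H¹(ℝ^N), one has ( ‖u‖_{L^q}^q )^{1 + (m - 1 + 2/N)/(q - 1)} ≤ S_N^{-1} · ‖∇( u^{(q+m-1)/2} )‖_{L²}² · ‖u‖_{L¹}^{(2q/N + m - 1)/(q - 1)}. -/

import Mathlib

open scoped ENNReal NNReal
open Set Function Finset MeasureTheory Measure Filter Topology

local prefix:max "#" => Fintype.card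




/-- FTC bound for everywhere-differentiable compactly supported real functions. -/
lemma my_ennnorm_le_lintegral_Iic_deriv
    {f : ℝ → ℝ} (hf : Differentiable ℝ f) (h'f : HasCompactSupport f) (x : ℝ) :
    (‖f x‖₊ : ℝ≥0∞) ≤ ∫⁻ y in Iic x, ‖deriv f y‖₊ := by
  by_cases h : (∫⁻ y in Iic x, ‖deriv f y‖₊) = ∞
  · simp [h]
  have hmeas : Measurable (deriv f) := measurable_deriv f
  have hint : MeasureTheory.IntegrableOn (deriv f) (Iic x) := by
    refine ⟨hmeas.aestronglyMeasurable.restrict, ?_⟩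
    simp only [MeasureTheory.HasFiniteIntegral, lt_top_iff_ne_top]; exact h
  have htendsto : Tendsto f atBot (𝓝 0) := by
    rw [hasCompactSupport_iff_eventuallyEq, Filter.coclosedCompact_eq_cocompact] at h'f
    exact h'f.filter_mono _root_.atBot_le_cocompact |>.tendsto
  have key : ∫ y in Iic x, deriv f y = f x := by
    rw [integral_Iic_of_hasDerivAt_of_tendsto hf.continuous.continuousWithinAt
      (fun y _ => (hf y).hasDerivAt) hint htendsto, sub_zero]
  calc (‖f x‖₊ : ℝ≥0∞) = ‖∫ y in Iic x, deriv f y‖₊ := by rw [key]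
    _ ≤ ∫⁻ y in Iic x, ‖deriv f y‖₊ := enorm_integral_le_lintegral_enorm _

theorem my_lintegral_pow_le_pow_lintegral_fderiv_aux {ι : Type*} [Fintype ι]
    {p : ℝ} (hp : Real.HolderConjugate #ι p)
    {u : (ι → ℝ) → ℝ} (hu : Differentiable ℝ u)
    (h2u : HasCompactSupport u) :
    ∫⁻ x, (‖u x‖₊ : ℝ≥0∞) ^ p ≤ (∫⁻ x, ‖fderiv ℝ u x‖₊) ^ p := by
  classical
  have : (1 : ℝ) ≤ ↑#ι - 1 := by
    have hι : (2 : ℝ) ≤ #ι := by exact_mod_cast hp.lt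
    linarith
  calc ∫⁻ x, (‖u x‖₊ : ℝ≥0∞) ^ p
      = ∫⁻ x, ((‖u x‖₊ : ℝ≥0∞) ^ (1 / (#ι - 1 : ℝ))) ^ (#ι : ℝ) := by
        congr! 2 with x
        rw [← ENNReal.rpow_mul, hp.conjugate_eq]
        field_simp
    _ = ∫⁻ x, ∏ _i : ι, (‖u x‖₊ : ℝ≥0∞) ^ (1 / (#ι - 1 : ℝ)) := by
        congr! 2 with x
        simp_rw [prod_const, card_univ]
        norm_cast
    _ ≤ ∫⁻ x, ∏ i, (∫⁻ xᵢ, ‖fderiv ℝ u (update x i xᵢ)‖₊) ^ ((1 : ℝ) / (#ι - 1 : ℝ)) := ?_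
    _ ≤ (∫⁻ x, ‖fderiv ℝ u x‖₊) ^ p := by
        apply lintegral_prod_lintegral_pow_le _ hp
        have : Measurable (fderiv ℝ u) := measurable_fderiv ℝ u
        fun_prop
  gcongr with x i
  calc (‖u x‖₊ : ℝ≥0∞)
    _ ≤ ∫⁻ xᵢ in Iic (x i), ‖deriv (u ∘ update x i) xᵢ‖₊ := by
        apply le_trans (by simp) (my_ennnorm_le_lintegral_Iic_deriv _ _ _)
        · exact hu.comp ((contDiff_update 1 x i).differentiable one_ne_zero)
        · exact h2u.comp_isClosedEmbedding (isClosedEmbedding_update x i)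
    _ ≤ ∫⁻ xᵢ, (‖fderiv ℝ u (update x i xᵢ)‖₊ : ℝ≥0∞) := ?_
  gcongr with y
  · exact Measure.restrict_le_self
  calc ‖deriv (u ∘ update x i) y‖₊ = ‖fderiv ℝ u (update x i y) (deriv (update x i) y)‖₊ := by
        rw [fderiv_comp_deriv _ (hu _)
          (hasDerivAt_update x i y).differentiableAt]
    _ ≤ ‖fderiv ℝ u (update x i y)‖₊ * ‖deriv (update x i) y‖₊ :=
        ContinuousLinearMap.le_opNNNorm ..
    _ ≤ ‖fderiv ℝ u (update x i y)‖₊ := by simp [deriv_update, Pi.nnnorm_single]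



theorem my_sobolev_two {ι : Type*} [Fintype ι] (hN : 3 ≤ #ι) {g : (ι → ℝ) → ℝ}
    (hg : Differentiable ℝ g) (h2g : HasCompactSupport g) :
    ∫⁻ x, (‖g x‖₊ : ℝ≥0∞) ^ (2 * (#ι : ℝ) / ((#ι : ℝ) - 2))
      ≤ ((ENNReal.ofReal (2 * ((#ι : ℝ) - 1) / ((#ι : ℝ) - 2)))
          * (∫⁻ x, (‖fderiv ℝ g x‖₊ : ℝ≥0∞) ^ (2 : ℝ)) ^ (1/2 : ℝ))
        ^ (2 * (#ι : ℝ) / ((#ι : ℝ) - 2)) := by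
  have hn : (3 : ℝ) ≤ #ι := by exact_mod_cast hN
  set n : ℝ := #ι with hn_def
  have hn2 : (0:ℝ) < n - 2 := by linarith
  have hn1 : (0:ℝ) < n - 1 := by linarith
  have hn0 : (0:ℝ) < n := by linarith
  set b : ℝ := 2 * n / (n - 2) with hb_def
  have hb : 0 < b := by positivity
  set γ : ℝ := 2 * (n - 1) / (n - 2) with hγ_def
  have hγpos : 0 < γ := by positivity
  have hγ1 : 1 < γ := by rw [hγ_def, lt_div_iff₀ hn2]; linarith
  set n' : ℝ := n / (n - 1) with hn'_def
  have hconj : Real.HolderConjugate n n' := by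
    rw [Real.holderConjugate_iff]; constructor
    · linarith
    · rw [hn'_def]; field_simp; ring
  have hγn' : γ * n' = b := by rw [hγ_def, hn'_def, hb_def]; field_simp
  have hγ2 : (γ - 1) * 2 = b := by rw [hγ_def, hb_def]; field_simp; ring
  have hsum : 1 / n' = 1 / b + 1 / 2 := by rw [hn'_def, hb_def]; field_simp; ring
  set γnn : ℝ≥0 := ⟨γ, hγpos.le⟩ with hγnn_def
  have hγnnc : (γnn : ℝ) = γ := rfl
  set V := ∫⁻ x, (‖g x‖₊ : ℝ≥0∞) ^ b with hV_def
  set G := ∫⁻ x, (‖fderiv ℝ g x‖₊ : ℝ≥0∞) ^ (2 : ℝ) with hG_def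
  have hofγ : ENNReal.ofReal γ = (γnn : ℝ≥0∞) := by
    rw [ENNReal.ofReal]; congr 1; exact (Real.toNNReal_of_nonneg hγpos.le).trans (by rfl) |>.symm ▸ rfl
  rw [hγ_def] at hofγ ⊢
  rw [← hγ_def, hofγ]
  show V ≤ ((γnn : ℝ≥0∞) * G ^ (1/2 : ℝ)) ^ b
  -- trivial case V = 0
  rcases eq_or_ne V 0 with hV0 | hV0
  · rw [hV0]; exact zero_le
  -- V is finite
  have hVtop : V ≠ ⊤ := by
    have h1 : MemLp g (ENNReal.ofReal b) volume :=
      hg.continuous.memLp_of_hasCompactSupport h2g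
    have hb0 : ENNReal.ofReal b ≠ 0 := by
      simp [ENNReal.ofReal_eq_zero, not_le, hb]
    have h2 : eLpNorm g (ENNReal.ofReal b) volume
        = (∫⁻ x, (‖g x‖₊ : ℝ≥0∞) ^ b) ^ (1 / b) := by
      rw [eLpNorm_eq_lintegral_rpow_enorm_toReal hb0 ENNReal.ofReal_ne_top,
        ENNReal.toReal_ofReal hb.le]; rfl
    have h3 := h1.eLpNorm_lt_top
    rw [h2] at h3
    intro hVt
    rw [← hV_def] at h3
    rw [hVt, ENNReal.top_rpow_of_pos (by positivity)] at h3
    exact (lt_irrefl _ h3).elim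
  -- the function w = ‖g‖ ^ γ
  set w : (ι → ℝ) → ℝ := fun x => ‖g x‖ ^ γ with hw_def
  have hw : Differentiable ℝ w := hg.norm_rpow hγ1
  have h2w : HasCompactSupport w := h2g.norm.rpow_const hγpos.ne'
  have hconjι : Real.HolderConjugate #ι n' := by rw [← hn_def]; exact hconj
  have step1 : V ^ (1 / n') ≤ ∫⁻ x, ‖fderiv ℝ w x‖₊ := by
    have h := my_lintegral_pow_le_pow_lintegral_fderiv_aux hconjι hw h2w
    have hlhs : ∫⁻ x, (‖w x‖₊ : ℝ≥0∞) ^ n' = V := by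
      rw [hV_def]
      congr 1 with x
      rw [hw_def]
      rw [Real.nnnorm_rpow_of_nonneg (norm_nonneg _), nnnorm_norm,
        ENNReal.coe_rpow_of_nonneg _ hγpos.le, ← ENNReal.rpow_mul, hγn']
    rw [hlhs] at h
    calc V ^ (1 / n') ≤ ((∫⁻ x, (‖fderiv ℝ w x‖₊ : ℝ≥0∞)) ^ n') ^ (1/n') := by
          exact ENNReal.rpow_le_rpow h (by positivity)
      _ = ∫⁻ x, ‖fderiv ℝ w x‖₊ := by
          rw [← ENNReal.rpow_mul, mul_one_div, div_self hconj.symm.pos.ne', ENNReal.rpow_one]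
  have step2 : (∫⁻ x, (‖fderiv ℝ w x‖₊ : ℝ≥0∞))
      ≤ γnn * ∫⁻ x, (‖g x‖₊ : ℝ≥0∞) ^ (γ - 1) * ‖fderiv ℝ g x‖₊ := by
    rw [← lintegral_const_mul' _ _ ENNReal.coe_ne_top]
    apply lintegral_mono
    intro x
    have hle := nnnorm_fderiv_norm_rpow_le hg (x := x) (p := γnn) (by exact_mod_cast hγ1)
    calc (‖fderiv ℝ w x‖₊ : ℝ≥0∞) = ‖fderiv ℝ (fun x => ‖g x‖ ^ (γnn:ℝ)) x‖₊ := by rfl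
      _ ≤ ((γnn * ‖g x‖₊ ^ ((γnn:ℝ) - 1) * ‖fderiv ℝ g x‖₊ : ℝ≥0) : ℝ≥0∞) :=
          ENNReal.coe_le_coe.mpr hle
      _ = (γnn : ℝ≥0∞) * ((‖g x‖₊ : ℝ≥0∞) ^ (γ - 1) * ‖fderiv ℝ g x‖₊) := by
          rw [ENNReal.coe_mul, ENNReal.coe_mul,
            ENNReal.coe_rpow_of_nonneg _ (by linarith : (0:ℝ) ≤ (γnn:ℝ) - 1), hγnnc, mul_assoc]
  have step3 : (∫⁻ x, (‖g x‖₊ : ℝ≥0∞) ^ (γ - 1) * ‖fderiv ℝ g x‖₊)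
      ≤ V ^ (1/2 : ℝ) * G ^ (1/2 : ℝ) := by
    have h22 : Real.HolderConjugate 2 2 := Real.holderConjugate_iff.mpr ⟨one_lt_two, by norm_num⟩
    have hgm : Measurable g := hg.continuous.measurable
    have hfm : Measurable (fderiv ℝ g) := measurable_fderiv ℝ g
    have := ENNReal.lintegral_mul_le_Lp_mul_Lq (volume : Measure (ι → ℝ)) h22
      (f := fun x => (‖g x‖₊ : ℝ≥0∞) ^ (γ - 1)) (g := fun x => (‖fderiv ℝ g x‖₊ : ℝ≥0∞))
      (by fun_prop) (by fun_prop)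
    calc (∫⁻ x, (‖g x‖₊ : ℝ≥0∞) ^ (γ - 1) * ‖fderiv ℝ g x‖₊)
        ≤ (∫⁻ x, ((‖g x‖₊ : ℝ≥0∞) ^ (γ - 1)) ^ (2:ℝ)) ^ (1/2 : ℝ)
          * (∫⁻ x, (‖fderiv ℝ g x‖₊ : ℝ≥0∞) ^ (2:ℝ)) ^ (1/2 : ℝ) := this
      _ = V ^ (1/2 : ℝ) * G ^ (1/2 : ℝ) := by
          congr 1
          rw [hV_def]
          congr 1
          apply lintegral_congr
          intro x
          rw [← ENNReal.rpow_mul, hγ2]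
  -- combine
  have main : V ^ (1 / n') ≤ γnn * (V ^ (1/2:ℝ) * G ^ (1/2:ℝ)) :=
    step1.trans (step2.trans (by gcongr))
  have hVhalf0 : V ^ (1/2:ℝ) ≠ 0 := by
    simp only [ne_eq, ENNReal.rpow_eq_zero_iff, not_or]
    constructor
    · rintro ⟨h, -⟩; exact hV0 h
    · rintro ⟨h, -⟩; exact hVtop h
  have hVhalftop : V ^ (1/2:ℝ) ≠ ⊤ := by
    exact ENNReal.rpow_ne_top_of_nonneg (by norm_num) hVtop
  have key : V ^ (1 / b) ≤ γnn * G ^ (1/2:ℝ) := by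
    rw [← ENNReal.mul_le_mul_iff_left hVhalf0 hVhalftop]
    calc V ^ (1/b) * V ^ (1/2:ℝ) = V ^ (1/n') := by
          rw [← ENNReal.rpow_add _ _ hV0 hVtop, hsum]
      _ ≤ γnn * (V ^ (1/2:ℝ) * G ^ (1/2:ℝ)) := main
      _ = γnn * G ^ (1/2:ℝ) * V ^ (1/2:ℝ) := by ring
  calc V = (V ^ (1/b)) ^ b := by
        rw [← ENNReal.rpow_mul, one_div, inv_mul_cancel₀ hb.ne', ENNReal.rpow_one]
    _ ≤ (γnn * G ^ (1/2:ℝ)) ^ b := ENNReal.rpow_le_rpow key hb.le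



theorem my_sobolev_two' {ι : Type*} [Fintype ι] (hN : 3 ≤ #ι) {v : (ι → ℝ) → ℝ}
    (hv : Differentiable ℝ v) (hT : (∫⁻ x, (‖v x‖₊ : ℝ≥0∞) ^ (2:ℝ)) ≠ ⊤) :
    ∫⁻ x, (‖v x‖₊ : ℝ≥0∞) ^ (2 * (#ι : ℝ) / ((#ι : ℝ) - 2))
      ≤ ((ENNReal.ofReal (2 * ((#ι : ℝ) - 1) / ((#ι : ℝ) - 2)))
          * (∫⁻ x, (‖fderiv ℝ v x‖₊ : ℝ≥0∞) ^ (2 : ℝ)) ^ (1/2 : ℝ))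
        ^ (2 * (#ι : ℝ) / ((#ι : ℝ) - 2)) := by
  have hn : (3 : ℝ) ≤ #ι := by exact_mod_cast hN
  set n : ℝ := #ι with hn_def
  have hn2 : (0:ℝ) < n - 2 := by linarith
  have hn0 : (0:ℝ) < n := by linarith
  set b : ℝ := 2 * n / (n - 2) with hb_def
  have hb : 0 < b := by positivity
  set γ : ℝ≥0∞ := ENNReal.ofReal (2 * (n - 1) / (n - 2)) with hγ_def
  have hγ0 : γ ≠ 0 := by
    rw [hγ_def]
    simp only [ne_eq, ENNReal.ofReal_eq_zero, not_le]
    apply div_pos (by linarith) hn2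
  have hγtop : γ ≠ ⊤ := ENNReal.ofReal_ne_top
  set G := ∫⁻ x, (‖fderiv ℝ v x‖₊ : ℝ≥0∞) ^ (2 : ℝ) with hG_def
  set T := ∫⁻ x, (‖v x‖₊ : ℝ≥0∞) ^ (2:ℝ) with hT_def
  -- trivial case G = ⊤
  rcases eq_or_ne G ⊤ with hGtop | hGtop
  · rw [hGtop, ENNReal.top_rpow_of_pos (by norm_num), ENNReal.mul_top hγ0,
      ENNReal.top_rpow_of_pos hb]
    exact le_top
  -- bump function
  set φ : ContDiffBump (0 : ι → ℝ) := ⟨1, 2, one_pos, one_lt_two⟩ with hφ_def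
  have hφc : ContDiff ℝ 1 ⇑φ := φ.contDiff
  have hφs : HasCompactSupport ⇑φ := φ.hasCompactSupport
  obtain ⟨K, hK⟩ := (hφs.fderiv (𝕜 := ℝ)).exists_bound_of_continuous
    (hφc.continuous_fderiv one_ne_zero)
  have hK0 : 0 ≤ K := le_trans (norm_nonneg _) (hK 0)
  -- the cutoff functions
  set χ : ℕ → (ι → ℝ) → ℝ := fun k x => φ ((k:ℝ)⁻¹ • x) with hχ_def
  set g : ℕ → (ι → ℝ) → ℝ := fun k x => χ k x * v x with hg_def
  have hχdiff : ∀ k, Differentiable ℝ (χ k) := by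
    intro k
    exact (hφc.differentiable one_ne_zero).comp (differentiable_id.const_smul ((k:ℝ)⁻¹))
  have hgdiff : ∀ k, Differentiable ℝ (g k) := fun k => (hχdiff k).mul hv
  have hgcont : ∀ k, Continuous (g k) := fun k => (hgdiff k).continuous
  have hχsupp : ∀ k, 1 ≤ k → HasCompactSupport (χ k) := by
    intro k hk
    have hkpos : (0:ℝ) < k := by exact_mod_cast hk
    apply HasCompactSupport.intro (isCompact_closedBall (0 : ι → ℝ) (2 * k))
    intro x hx
    apply φ.zero_of_le_dist
    simp only [hφ_def]
    rw [dist_zero_right, norm_smul, norm_inv, Real.norm_natCast]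
    rw [Metric.mem_closedBall, dist_zero_right, not_le] at hx
    rw [le_inv_mul_iff₀ hkpos]
    linarith
  have hgsupp : ∀ k, 1 ≤ k → HasCompactSupport (g k) :=
    fun k hk => (hχsupp k hk).mul_right
  -- derivative bound
  have hχval : ∀ k x, 0 ≤ χ k x ∧ χ k x ≤ 1 := fun k x => ⟨φ.nonneg, φ.le_one⟩
  have hχderiv : ∀ k x, ‖fderiv ℝ (χ k) x‖ ≤ K * (k:ℝ)⁻¹ := by
    intro k x
    have h1 : fderiv ℝ (χ k) x = (fderiv ℝ (⇑φ) ((k:ℝ)⁻¹ • x)).comp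
        (fderiv ℝ (fun y : ι → ℝ => (k:ℝ)⁻¹ • y) x) := by
      exact fderiv_comp x (hφc.differentiable one_ne_zero _)
        ((differentiable_id.const_smul ((k:ℝ)⁻¹)) x)
    have h2 : fderiv ℝ (fun y : ι → ℝ => (k:ℝ)⁻¹ • y) x
        = (k:ℝ)⁻¹ • ContinuousLinearMap.id ℝ (ι → ℝ) := by
      rw [show (fun y : ι → ℝ => (k:ℝ)⁻¹ • y) = (fun y : ι → ℝ => (k:ℝ)⁻¹ • id y) from rfl,
        fderiv_fun_const_smul differentiable_id.differentiableAt, fderiv_id]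
    rw [h1, h2]
    calc ‖(fderiv ℝ (⇑φ) ((k:ℝ)⁻¹ • x)).comp ((k:ℝ)⁻¹ • ContinuousLinearMap.id ℝ (ι → ℝ))‖
        ≤ ‖fderiv ℝ (⇑φ) ((k:ℝ)⁻¹ • x)‖ * ‖(k:ℝ)⁻¹ • ContinuousLinearMap.id ℝ (ι → ℝ)‖ :=
          ContinuousLinearMap.opNorm_comp_le _ _
      _ ≤ K * (k:ℝ)⁻¹ := by
          have h3 : ‖(k:ℝ)⁻¹ • ContinuousLinearMap.id ℝ (ι → ℝ)‖ ≤ (k:ℝ)⁻¹ := by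
            refine (norm_smul_le ((k:ℝ)⁻¹) (ContinuousLinearMap.id ℝ (ι → ℝ))).trans ?_
            rw [norm_inv, Real.norm_natCast]
            exact mul_le_of_le_one_right (by positivity) ContinuousLinearMap.norm_id_le
          exact mul_le_mul (hK _) h3 (norm_nonneg _) hK0
  have hgderiv : ∀ k x, ‖fderiv ℝ (g k) x‖ ≤ ‖fderiv ℝ v x‖ + (K * (k:ℝ)⁻¹) * ‖v x‖ := by
    intro k x
    have h1 : fderiv ℝ (g k) x = χ k x • fderiv ℝ v x + v x • fderiv ℝ (χ k) x :=
      fderiv_mul ((hχdiff k) x) (hv x)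
    rw [h1]
    calc ‖χ k x • fderiv ℝ v x + v x • fderiv ℝ (χ k) x‖
        ≤ ‖χ k x • fderiv ℝ v x‖ + ‖v x • fderiv ℝ (χ k) x‖ := norm_add_le _ _
      _ ≤ ‖fderiv ℝ v x‖ + (K * (k:ℝ)⁻¹) * ‖v x‖ := by
          gcongr ?_ + ?_
          · rw [norm_smul]
            calc ‖χ k x‖ * ‖fderiv ℝ v x‖ ≤ 1 * ‖fderiv ℝ v x‖ := by
                  apply mul_le_mul_of_nonneg_right _ (norm_nonneg _)
                  rw [Real.norm_eq_abs, abs_of_nonneg (hχval k x).1]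
                  exact (hχval k x).2
              _ = ‖fderiv ℝ v x‖ := one_mul _
          · rw [norm_smul, mul_comm]
            exact mul_le_mul_of_nonneg_right (hχderiv k x) (norm_nonneg _)
  -- lintegral bound on the gradient of g k
  have hmink : ∀ k : ℕ, (∫⁻ x, (‖fderiv ℝ (g k) x‖₊ : ℝ≥0∞) ^ (2:ℝ)) ^ (1/2:ℝ)
      ≤ G ^ (1/2:ℝ) + ENNReal.ofReal (K * (k:ℝ)⁻¹) * T ^ (1/2:ℝ) := by
    intro k
    have hmono : (∫⁻ x, (‖fderiv ℝ (g k) x‖₊ : ℝ≥0∞) ^ (2:ℝ))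
        ≤ ∫⁻ x, ((‖fderiv ℝ v x‖₊ : ℝ≥0∞) + ENNReal.ofReal (K * (k:ℝ)⁻¹) * ‖v x‖₊) ^ (2:ℝ) := by
      apply lintegral_mono
      intro x
      apply ENNReal.rpow_le_rpow _ (by norm_num)
      calc (‖fderiv ℝ (g k) x‖₊ : ℝ≥0∞) = ENNReal.ofReal ‖fderiv ℝ (g k) x‖ :=
            (ofReal_norm_eq_enorm _).symm
        _ ≤ ENNReal.ofReal (‖fderiv ℝ v x‖ + (K * (k:ℝ)⁻¹) * ‖v x‖) :=
            ENNReal.ofReal_le_ofReal (hgderiv k x)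
        _ = (‖fderiv ℝ v x‖₊ : ℝ≥0∞) + ENNReal.ofReal (K * (k:ℝ)⁻¹) * ‖v x‖₊ := by
            rw [ENNReal.ofReal_add (norm_nonneg _) (by positivity),
              ENNReal.ofReal_mul (by positivity), ofReal_norm_eq_enorm,
              ofReal_norm_eq_enorm, enorm_eq_nnnorm, enorm_eq_nnnorm]
    have hmeas1 : AEMeasurable (fun x => (‖fderiv ℝ v x‖₊ : ℝ≥0∞)) (volume : Measure (ι → ℝ)) := by
      have : Measurable (fderiv ℝ v) := measurable_fderiv ℝ v
      fun_prop
    have hmeas2 : AEMeasurable (fun x => ENNReal.ofReal (K * (k:ℝ)⁻¹) * (‖v x‖₊ : ℝ≥0∞))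
        (volume : Measure (ι → ℝ)) := by
      have : Continuous v := hv.continuous
      fun_prop
    calc (∫⁻ x, (‖fderiv ℝ (g k) x‖₊ : ℝ≥0∞) ^ (2:ℝ)) ^ (1/2:ℝ)
        ≤ (∫⁻ x, ((‖fderiv ℝ v x‖₊ : ℝ≥0∞) + ENNReal.ofReal (K * (k:ℝ)⁻¹) * ‖v x‖₊) ^ (2:ℝ))
            ^ (1/2:ℝ) := ENNReal.rpow_le_rpow hmono (by norm_num)
      _ ≤ (∫⁻ x, (‖fderiv ℝ v x‖₊ : ℝ≥0∞) ^ (2:ℝ)) ^ (1/2:ℝ)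
          + (∫⁻ x, (ENNReal.ofReal (K * (k:ℝ)⁻¹) * (‖v x‖₊ : ℝ≥0∞)) ^ (2:ℝ)) ^ (1/2:ℝ) :=
          ENNReal.lintegral_Lp_add_le hmeas1 hmeas2 one_le_two
      _ = G ^ (1/2:ℝ) + ENNReal.ofReal (K * (k:ℝ)⁻¹) * T ^ (1/2:ℝ) := by
          congr 1
          rw [hT_def]
          rw [show (∫⁻ x, (ENNReal.ofReal (K * (k:ℝ)⁻¹) * (‖v x‖₊ : ℝ≥0∞)) ^ (2:ℝ))
              = ENNReal.ofReal (K * (k:ℝ)⁻¹) ^ (2:ℝ) * ∫⁻ x, (‖v x‖₊ : ℝ≥0∞) ^ (2:ℝ) from ?_]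
          · rw [ENNReal.mul_rpow_of_nonneg _ _ (by norm_num : (0:ℝ) ≤ 1/2),
              ← ENNReal.rpow_mul]
            norm_num
          · rw [← lintegral_const_mul' _ _ (ENNReal.rpow_ne_top_of_nonneg (by norm_num) ENNReal.ofReal_ne_top)]
            congr 1 with x
            rw [ENNReal.mul_rpow_of_nonneg _ _ (by norm_num : (0:ℝ) ≤ 2)]
  -- apply compact-support Sobolev to g k
  have hbound : ∀ k : ℕ, 1 ≤ k → (∫⁻ x, (‖g k x‖₊ : ℝ≥0∞) ^ b)
      ≤ (γ * (G ^ (1/2:ℝ) + ENNReal.ofReal K * (k:ℝ≥0∞)⁻¹ * T ^ (1/2:ℝ))) ^ b := by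
    intro k hk
    have h := my_sobolev_two hN (hgdiff k) (hgsupp k hk)
    rw [← hn_def, ← hb_def, ← hγ_def] at h
    refine h.trans ?_
    apply ENNReal.rpow_le_rpow _ hb.le
    apply mul_le_mul_right -- γ * _ ≤ γ * _
    refine (hmink k).trans ?_
    apply add_le_add_right
    apply mul_le_mul_left
    rw [ENNReal.ofReal_mul hK0]
    apply mul_le_mul_right
    rcases Nat.eq_zero_or_pos k with rfl | hkpos
    · simp
    · rw [ENNReal.ofReal_inv_of_pos (by exact_mod_cast hkpos), ENNReal.ofReal_natCast]
  -- pointwise convergence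
  have hpt : ∀ x, Tendsto (fun k => (‖g k x‖₊ : ℝ≥0∞) ^ b) atTop (𝓝 ((‖v x‖₊ : ℝ≥0∞) ^ b)) := by
    intro x
    apply Tendsto.congr' _ tendsto_const_nhds
    filter_upwards [eventually_ge_atTop (max 1 ⌈‖x‖⌉₊)] with k hk
    have hk1 : 1 ≤ k := le_trans (le_max_left _ _) hk
    have hkx : ‖x‖ ≤ k := by
      calc ‖x‖ ≤ (⌈‖x‖⌉₊ : ℝ) := Nat.le_ceil _
        _ ≤ k := by exact_mod_cast le_trans (le_max_right _ _) hk
    have hχ1 : χ k x = 1 := by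
      apply φ.one_of_mem_closedBall
      simp only [hφ_def]
      rw [Metric.mem_closedBall, dist_zero_right, norm_smul, norm_inv, Real.norm_natCast]
      have hkpos : (0:ℝ) < k := by
        have : (1:ℝ) ≤ k := by exact_mod_cast hk1
        linarith
      rw [inv_mul_le_iff₀ hkpos, mul_one]
      exact hkx
    have : g k x = v x := by rw [hg_def]; simp [hχ1]
    rw [this]
  -- Fatou
  calc ∫⁻ x, (‖v x‖₊ : ℝ≥0∞) ^ b
      = ∫⁻ x, liminf (fun k => (‖g k x‖₊ : ℝ≥0∞) ^ b) atTop := by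
        apply lintegral_congr
        intro x
        exact ((hpt x).liminf_eq).symm
    _ ≤ liminf (fun k => ∫⁻ x, (‖g k x‖₊ : ℝ≥0∞) ^ b) atTop := by
        apply lintegral_liminf_le
        intro k
        have : Continuous (g k) := hgcont k
        fun_prop
    _ ≤ liminf (fun k : ℕ =>
          (γ * (G ^ (1/2:ℝ) + ENNReal.ofReal K * (k:ℝ≥0∞)⁻¹ * T ^ (1/2:ℝ))) ^ b) atTop := by
        have hev : ∀ᶠ k in (atTop : Filter ℕ), (∫⁻ x, (‖g k x‖₊ : ℝ≥0∞) ^ b)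
            ≤ (γ * (G ^ (1/2:ℝ) + ENNReal.ofReal K * (k:ℝ≥0∞)⁻¹ * T ^ (1/2:ℝ))) ^ b := by
          filter_upwards [eventually_ge_atTop 1] with k hk
          exact hbound k hk
        exact liminf_le_liminf hev
    _ = (γ * G ^ (1/2:ℝ)) ^ b := by
        apply Filter.Tendsto.liminf_eq
        have h0 : Tendsto (fun k : ℕ => ENNReal.ofReal K * (k:ℝ≥0∞)⁻¹ * T ^ (1/2:ℝ))
            atTop (𝓝 0) := by
          have h1 : Tendsto (fun k : ℕ => (k:ℝ≥0∞)⁻¹) atTop (𝓝 0) :=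
            ENNReal.tendsto_inv_nat_nhds_zero
          have h2 := ENNReal.Tendsto.const_mul (a := ENNReal.ofReal K) h1 (Or.inr ENNReal.ofReal_ne_top)
          rw [mul_zero] at h2
          have hTtop : T ^ (1/2:ℝ) ≠ ⊤ := ENNReal.rpow_ne_top_of_nonneg (by norm_num) hT
          have h3 := ENNReal.Tendsto.mul_const (b := T ^ (1/2:ℝ)) h2 (Or.inr hTtop)
          rwa [zero_mul] at h3
        have h4 : Tendsto (fun k : ℕ => G ^ (1/2:ℝ) + ENNReal.ofReal K * (k:ℝ≥0∞)⁻¹ * T ^ (1/2:ℝ))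
            atTop (𝓝 (G ^ (1/2:ℝ))) := by
          have := Tendsto.add (tendsto_const_nhds :
            Tendsto (fun _ : ℕ => G ^ (1/2:ℝ)) atTop (𝓝 (G ^ (1/2:ℝ)))) h0
          rwa [add_zero] at this
        have h5 := ENNReal.Tendsto.const_mul h4 (Or.inr hγtop)
        exact (ENNReal.continuous_rpow_const.tendsto _).comp h5



lemma exp_id1 (n q m : ℝ) (hn2 : (0:ℝ) < n - 2) (hn0 : (0:ℝ) < n) (hq1 : (0:ℝ) < q - 1)
    (hr : (0:ℝ) < q + m - 1) :
    (2*n/(n-2) - 2*q/(q+m-1)) * (1 + (m-1+2/n)/(q-1))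
      = ((2*q/n + m - 1)/(q-1)) * (2*n/(n-2) - 2/(q+m-1)) := by
  field_simp
  ring

lemma exp_id2 (n q m : ℝ) (hn2 : (0:ℝ) < n - 2) (hn0 : (0:ℝ) < n) (hq1 : (0:ℝ) < q - 1)
    (hr : (0:ℝ) < q + m - 1) :
    (2*n/(n-2)) * ((2*q/(q+m-1) - 2/(q+m-1)) * (1 + (m-1+2/n)/(q-1)))
      = 2 * (2*n/(n-2) - 2/(q+m-1)) := by
  field_simp
  ring

lemma exp_id3 (n q m : ℝ) (hn2 : (0:ℝ) < n - 2) (hn0 : (0:ℝ) < n) (hq1 : (0:ℝ) < q - 1)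
    (hr : (0:ℝ) < q + m - 1) :
    (2*q/(q+m-1)) * (1 + (m-1+2/n)/(q-1)) - (2/(q+m-1)) * ((2*q/n + m - 1)/(q-1)) = 2 := by
  field_simp
  ring

theorem stmt13 (N : ℕ) (hN : 3 ≤ N) :
    ∃ S : ℝ, 0 < S ∧ ∀ (q m : ℝ), 1 < q → 1 - 2 / (N : ℝ) < m →
      ∀ u : (Fin N → ℝ) → ℝ, (∀ x, 0 ≤ u x) →
      -- `u ∈ L¹(ℝᴺ)`
      Integrable u →
      -- `u ∈ L^q(ℝᴺ)`
      Integrable (fun x => (u x) ^ q) →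
      -- `u^{(q+m-1)/2} ∈ H¹(ℝᴺ)` (differentiable, in `L²`, with gradient in `L²`)
      Differentiable ℝ (fun x => (u x) ^ ((q + m - 1) / 2)) →
      Integrable (fun x => ((u x) ^ ((q + m - 1) / 2)) ^ 2) →
      Integrable (fun x => ‖fderiv ℝ (fun x => (u x) ^ ((q + m - 1) / 2)) x‖ ^ 2) →
      (∫ x, (u x) ^ q) ^ (1 + (m - 1 + 2 / (N : ℝ)) / (q - 1))
        ≤ S⁻¹ * (∫ x, ‖fderiv ℝ (fun x => (u x) ^ ((q + m - 1) / 2)) x‖ ^ 2)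
          * (∫ x, u x) ^ ((2 * q / (N : ℝ) + m - 1) / (q - 1)) := by
  have hn : (3:ℝ) ≤ (N:ℝ) := by exact_mod_cast hN
  set n : ℝ := (N:ℝ) with hn_def
  have hn2 : (0:ℝ) < n - 2 := by linarith
  have hn0 : (0:ℝ) < n := by linarith
  set c : ℝ := 2 * (n - 1) / (n - 2) with hc_def
  have hc0 : 0 < c := by apply div_pos (by linarith) hn2
  refine ⟨(c ^ 2)⁻¹, by positivity, ?_⟩
  intro q m hq hm u hu0 hu1 huq hvdiff hv2 hg2
  have hq1 : (0:ℝ) < q - 1 := by linarith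
  have h2N : 2 / n ≤ 2 / 3 :=
    div_le_div_of_nonneg_left (by norm_num) (by norm_num) hn
  have hr : (0:ℝ) < q + m - 1 := by linarith
  set r : ℝ := q + m - 1 with hr_def
  set v : (Fin N → ℝ) → ℝ := fun x => (u x) ^ (r / 2) with hv_def
  set a : ℝ := 2 / r with ha_def
  set s : ℝ := 2 * q / r with hs_def
  set b : ℝ := 2 * n / (n - 2) with hb_def
  have hb : 0 < b := div_pos (by linarith) hn2
  have ha : 0 < a := div_pos (by norm_num) hr
  have hs0 : 0 < s := div_pos (by linarith) hr
  have has : a < s := by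
    rw [ha_def, hs_def]
    apply div_lt_div_of_pos_right (by linarith) hr
  have hnm : n * (1 - 2/n) = n - 2 := by field_simp
  have hsb : s < b := by
    rw [hs_def, hb_def, div_lt_div_iff₀ hr hn2]
    nlinarith [mul_lt_mul_of_pos_left hm hn0, hnm, mul_pos hn0 hq1]
  have hba : 0 < b - a := by linarith
  set t : ℝ := (b - s) / (b - a) with ht_def
  have ht0 : 0 < t := div_pos (by linarith) hba
  have ht1 : t < 1 := by rw [ht_def, div_lt_one hba]; linarith
  set α : ℝ := 1 + (m - 1 + 2 / n) / (q - 1) with hα_def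
  set β : ℝ := (2 * q / n + m - 1) / (q - 1) with hβ_def
  have hα0 : 0 < α := by
    rw [hα_def]
    have h1 : 0 < m - 1 + 2 / n := by linarith
    positivity
  have hβ0 : 0 < β := by
    rw [hβ_def]
    apply div_pos _ hq1
    have h1 : 2 / n < 2 * q / n := div_lt_div_of_pos_right (by linarith) hn0
    linarith
  -- exponent identities
  have hts : t * a + (1 - t) * b = s := by
    have h : t * (b - a) = b - s := by rw [ht_def, div_mul_cancel₀ _ hba.ne']
    linear_combination -h
  have htα : t * α = β := by
    rw [ht_def, hα_def, hβ_def, hs_def, ha_def, hb_def, hr_def, div_mul_eq_mul_div,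
      exp_id1 n q m hn2 hn0 hq1 hr, mul_div_assoc]
    rw [div_self, mul_one]
    have hba' := hba
    rw [hb_def, ha_def, hr_def] at hba'
    exact hba'.ne'
  have hbtα : b * ((1 - t) * α) = 2 := by
    have h5 : (1 - t) * b = s - t * a := by linarith [hts]
    calc b * ((1 - t) * α) = ((1 - t) * b) * α := by ring
      _ = (s - t * a) * α := by rw [h5]
      _ = s * α - a * (t * α) := by ring
      _ = s * α - a * β := by rw [htα]
      _ = 2 := by
          rw [hs_def, ha_def, hα_def, hβ_def, hr_def]
          exact exp_id3 n q m hn2 hn0 hq1 hr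
  -- basic facts about v
  have hv0 : ∀ x, 0 ≤ v x := fun x => Real.rpow_nonneg (hu0 x) _
  have hvcont : Continuous v := hvdiff.continuous
  set W : (Fin N → ℝ) → ℝ≥0∞ := fun x => ENNReal.ofReal (v x) with hW_def
  have hWmeas : Measurable W := ENNReal.measurable_ofReal.comp hvcont.measurable
  have hva : ∀ x, (v x) ^ a = u x := by
    intro x
    rw [show v x = u x ^ (r/2) from rfl,
      ← Real.rpow_mul (hu0 x), show r / 2 * a = 1 by rw [ha_def]; field_simp, Real.rpow_one]
  have hvs : ∀ x, (v x) ^ s = u x ^ q := by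
    intro x
    rw [show v x = u x ^ (r/2) from rfl,
      ← Real.rpow_mul (hu0 x), show r / 2 * s = q by rw [hs_def]; field_simp]
  have hpow2 : ∀ (y : ℝ), 0 ≤ y → ENNReal.ofReal (y ^ (2:ℕ)) = ENNReal.ofReal y ^ (2:ℝ) := by
    intro y hy
    rw [← Real.rpow_natCast y 2, ← ENNReal.ofReal_rpow_of_nonneg hy (by norm_num)]
    norm_num
  -- the three main quantities
  set A := ∫⁻ x, W x ^ s with hA_def
  set B := ∫⁻ x, W x ^ a with hB_def
  set V := ∫⁻ x, W x ^ b with hV_def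
  set G := ∫⁻ x, (‖fderiv ℝ v x‖₊ : ℝ≥0∞) ^ (2:ℝ) with hG_def
  -- relation to the real integrals
  have hAeq : ENNReal.ofReal (∫ x, u x ^ q) = A := by
    rw [ofReal_integral_eq_lintegral_ofReal huq (ae_of_all _ fun x => Real.rpow_nonneg (hu0 x) q),
      hA_def]
    apply lintegral_congr
    intro x
    rw [show W x = ENNReal.ofReal (v x) from rfl,
      ENNReal.ofReal_rpow_of_nonneg (hv0 x) hs0.le, hvs x]
  have hBeq : ENNReal.ofReal (∫ x, u x) = B := by
    rw [ofReal_integral_eq_lintegral_ofReal hu1 (ae_of_all _ hu0), hB_def]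
    apply lintegral_congr
    intro x
    rw [show W x = ENNReal.ofReal (v x) from rfl,
      ENNReal.ofReal_rpow_of_nonneg (hv0 x) ha.le, hva x]
  have hGeq : ENNReal.ofReal (∫ x, ‖fderiv ℝ v x‖ ^ 2) = G := by
    rw [ofReal_integral_eq_lintegral_ofReal hg2 (ae_of_all _ fun x => by positivity), hG_def]
    apply lintegral_congr
    intro x
    rw [hpow2 _ (norm_nonneg _), ofReal_norm_eq_enorm, enorm_eq_nnnorm]
  have hAne : A ≠ ⊤ := by rw [← hAeq]; exact ENNReal.ofReal_ne_top
  have hBne : B ≠ ⊤ := by rw [← hBeq]; exact ENNReal.ofReal_ne_top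
  have hGne : G ≠ ⊤ := by rw [← hGeq]; exact ENNReal.ofReal_ne_top
  have hArel : (∫ x, u x ^ q) = A.toReal := by
    rw [← hAeq, ENNReal.toReal_ofReal (integral_nonneg (fun x => Real.rpow_nonneg (hu0 x) q))]
  have hBrel : (∫ x, u x) = B.toReal := by
    rw [← hBeq, ENNReal.toReal_ofReal (integral_nonneg hu0)]
  have hGrel : (∫ x, ‖fderiv ℝ v x‖ ^ 2) = G.toReal := by
    rw [← hGeq, ENNReal.toReal_ofReal (integral_nonneg (fun x => by positivity))]
  -- Sobolev inequality for v
  have hTne : (∫⁻ x, (‖v x‖₊ : ℝ≥0∞) ^ (2:ℝ)) ≠ ⊤ := by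
    have h1 : (∫⁻ x, (‖v x‖₊ : ℝ≥0∞) ^ (2:ℝ)) = ∫⁻ x, ENNReal.ofReal ((v x) ^ (2:ℕ)) := by
      apply lintegral_congr
      intro x
      rw [hpow2 _ (hv0 x), ← enorm_eq_nnnorm, Real.enorm_eq_ofReal (hv0 x)]
    rw [h1, ← ofReal_integral_eq_lintegral_ofReal hv2 (ae_of_all _ fun x => by positivity)]
    exact ENNReal.ofReal_ne_top
  have hVbound : V ≤ (ENNReal.ofReal c * G ^ (1/2:ℝ)) ^ b := by
    have hcard : (3:ℕ) ≤ #(Fin N) := by rw [Fintype.card_fin]; exact hN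
    have hsob := my_sobolev_two' hcard hvdiff hTne
    simp only [Fintype.card_fin] at hsob
    rw [← hn_def, ← hb_def, ← hc_def, ← hG_def] at hsob
    refine le_trans (le_of_eq ?_) hsob
    rw [hV_def]
    apply lintegral_congr
    intro x
    rw [show W x = ENNReal.ofReal (v x) from rfl, ← enorm_eq_nnnorm, Real.enorm_eq_ofReal (hv0 x)]
  -- Hölder interpolation
  have hconjt : Real.HolderConjugate (1/t) (1/(1-t)) := by
    rw [Real.holderConjugate_iff]; constructor
    · exact one_lt_one_div ht0 ht1
    · rw [one_div, one_div, inv_inv, inv_inv]; ring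
  have hAH : A ≤ B ^ t * V ^ (1 - t) := by
    have hf : AEMeasurable (fun x => W x ^ (t * a)) (volume : Measure (Fin N → ℝ)) :=
      (hWmeas.pow_const _).aemeasurable
    have hg : AEMeasurable (fun x => W x ^ ((1 - t) * b)) (volume : Measure (Fin N → ℝ)) :=
      (hWmeas.pow_const _).aemeasurable
    have hH := ENNReal.lintegral_mul_le_Lp_mul_Lq (volume : Measure (Fin N → ℝ)) hconjt hf hg
    calc A = ∫⁻ x, (W x ^ (t * a)) * (W x ^ ((1 - t) * b)) := by
          rw [hA_def]
          apply lintegral_congr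
          intro x
          rw [← ENNReal.rpow_add_of_nonneg _ _ (mul_nonneg ht0.le ha.le) (mul_nonneg (by linarith) hb.le), hts]
      _ ≤ (∫⁻ x, (W x ^ (t * a)) ^ (1/t)) ^ (1/(1/t))
          * (∫⁻ x, (W x ^ ((1 - t) * b)) ^ (1/(1-t))) ^ (1/(1/(1-t))) := hH
      _ = B ^ t * V ^ (1 - t) := by
          rw [one_div_one_div, one_div_one_div]
          congr 1
          · congr 1
            apply lintegral_congr
            intro x
            rw [← ENNReal.rpow_mul, show t * a * (1/t) = a by
              rw [mul_one_div, mul_comm t a, mul_div_assoc, div_self ht0.ne', mul_one]]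
          · congr 1
            apply lintegral_congr
            intro x
            have h1t0 : (1:ℝ) - t ≠ 0 := ne_of_gt (by linarith)
            rw [← ENNReal.rpow_mul, show (1 - t) * b * (1/(1-t)) = b by
              rw [mul_one_div, mul_comm (1-t) b, mul_div_assoc, div_self h1t0, mul_one]]
  -- main ENNReal estimate
  have hmain : A ^ α ≤ ENNReal.ofReal c ^ (2:ℝ) * G * B ^ β := by
    calc A ^ α ≤ (B ^ t * V ^ (1 - t)) ^ α := ENNReal.rpow_le_rpow hAH hα0.le
      _ = B ^ (t * α) * V ^ ((1 - t) * α) := by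
          rw [ENNReal.mul_rpow_of_nonneg _ _ hα0.le, ← ENNReal.rpow_mul, ← ENNReal.rpow_mul]
      _ ≤ B ^ (t * α) * ((ENNReal.ofReal c * G ^ (1/2:ℝ)) ^ b) ^ ((1 - t) * α) := by
          apply mul_le_mul_right
          exact ENNReal.rpow_le_rpow hVbound (mul_nonneg (by linarith) hα0.le)
      _ = B ^ β * (ENNReal.ofReal c * G ^ (1/2:ℝ)) ^ (2:ℝ) := by
          rw [htα, ← ENNReal.rpow_mul, hbtα]
      _ = ENNReal.ofReal c ^ (2:ℝ) * G * B ^ β := by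
          rw [ENNReal.mul_rpow_of_nonneg _ _ (by norm_num : (0:ℝ) ≤ 2), ← ENNReal.rpow_mul]
          rw [show (1/2:ℝ) * 2 = 1 by norm_num, ENNReal.rpow_one]
          ring
  -- convert to the real inequality
  rw [inv_inv, hArel, hBrel, hGrel]
  have hRne : ENNReal.ofReal c ^ (2:ℝ) * G * B ^ β ≠ ⊤ := by
    apply ENNReal.mul_ne_top
    apply ENNReal.mul_ne_top
    · exact ENNReal.rpow_ne_top_of_nonneg (by norm_num) ENNReal.ofReal_ne_top
    · exact hGne
    · exact ENNReal.rpow_ne_top_of_nonneg hβ0.le hBne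
  calc A.toReal ^ α = (A ^ α).toReal := ENNReal.toReal_rpow A α
    _ ≤ (ENNReal.ofReal c ^ (2:ℝ) * G * B ^ β).toReal := ENNReal.toReal_mono hRne hmain
    _ = c ^ 2 * G.toReal * B.toReal ^ β := by
        rw [ENNReal.toReal_mul, ENNReal.toReal_mul, ← ENNReal.toReal_rpow,
          ← ENNReal.toReal_rpow, ENNReal.toReal_ofReal hc0.le]
        rw [show (c:ℝ) ^ (2:ℝ) = c ^ (2:ℕ) by rw [← Real.rpow_natCast c 2]; norm_num]
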